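/- Consider binary classification of the Gaussian mixture in ℝ^d where class +1 ∼ N(γμ, σ²I) and class −1 ∼ N(−γμ, I) with μ = (η,...,η), η > 0, γ > 0, σ > 1. Among linear classifiers f(x) = sign(wᵀx + b) with ‖w‖₂ = 1, any classifier minimizing the standard error R(f|+1) + R(f|−1) must have w = (1/√d, ..., 1/√d). -/

import Mathlib

open Real Set

/-- Standard normal cumulative distribution function. -/
noncomputable def stdNormalCDF (z : ℝ) : ℝ :=
  ∫ t in Set.Iic z, (Real.sqrt (2 * Real.pi))⁻¹ * Real.exp (-t ^ 2 / 2)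

/-- Total standard error (sum of the two class-conditional errors) of the linear
classifier `x ↦ sign(wᵀx + b)` on the Gaussian mixture where class +1 has
distribution `N(γμ, σ²I)` and class −1 has distribution `N(−γμ, I)`,
with `μ = (η,…,η)`.  The projection `wᵀx` is Gaussian with mean `±γη∑ᵢwᵢ`
and variance `σ²` (resp. `1`), which yields the closed form below. -/
noncomputable def mixtureStdError (d : ℕ) (γ η σ : ℝ) (w : Fin d → ℝ) (b : ℝ) : ℝ :=
  stdNormalCDF ((-b - γ * η * (∑ i, w i)) / σ) + stdNormalCDF (b - γ * η * (∑ i, w i))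

lemma gauss_integrable : MeasureTheory.Integrable
    (fun t : ℝ => (Real.sqrt (2 * Real.pi))⁻¹ * Real.exp (-t ^ 2 / 2)) := by
  have h := (integrable_exp_neg_mul_sq (by norm_num : (0:ℝ) < 1/2)).const_mul
    (Real.sqrt (2 * Real.pi))⁻¹
  convert h using 2 with t
  ring_nf

lemma stdNormalCDF_strictMono : StrictMono stdNormalCDF := by
  intro a c hac
  have hInt := gauss_integrable
  have hdiff : stdNormalCDF c - stdNormalCDF a
      = ∫ t in a..c, (Real.sqrt (2 * Real.pi))⁻¹ * Real.exp (-t ^ 2 / 2) :=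
    intervalIntegral.integral_Iic_sub_Iic hInt.integrableOn hInt.integrableOn
  have hpos : 0 < ∫ t in a..c, (Real.sqrt (2 * Real.pi))⁻¹ * Real.exp (-t ^ 2 / 2) := by
    apply intervalIntegral.intervalIntegral_pos_of_pos (f := fun t =>
      (Real.sqrt (2 * Real.pi))⁻¹ * Real.exp (-t ^ 2 / 2)) hInt.intervalIntegrable _ hac
    intro x; positivity
  linarith

theorem stmt8 (d : ℕ) (γ η σ : ℝ) (hd : 1 ≤ d) (hσ : 1 < σ) (hη : 0 < η) (hγ : 0 < γ)
    (w : Fin d → ℝ) (b : ℝ) (hw : ∑ i, (w i) ^ 2 = 1)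
    (hopt : ∀ (w' : Fin d → ℝ) (b' : ℝ), ∑ i, (w' i) ^ 2 = 1 →
      mixtureStdError d γ η σ w b ≤ mixtureStdError d γ η σ w' b') :
    ∀ i, w i = 1 / Real.sqrt d := by
  have hd0 : (0:ℝ) < (d:ℝ) := by exact_mod_cast Nat.lt_of_lt_of_le Nat.zero_lt_one hd
  have hsd : (0:ℝ) < Real.sqrt d := Real.sqrt_pos.mpr hd0
  have hsq : Real.sqrt d * Real.sqrt d = (d:ℝ) := Real.mul_self_sqrt hd0.le
  set u : Fin d → ℝ := fun _ => 1 / Real.sqrt d with hu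
  have hsum_u : ∑ i, u i = Real.sqrt d := by
    simp only [hu, Finset.sum_const, Finset.card_univ, Fintype.card_fin, nsmul_eq_mul]
    field_simp
    rw [sq, hsq]
  have hw_u : ∑ i, (u i) ^ 2 = 1 := by
    simp only [hu, Finset.sum_const, Finset.card_univ, Fintype.card_fin, nsmul_eq_mul]
    rw [div_pow, one_pow, sq, hsq]
    field_simp
  -- Cauchy–Schwarz: ∑ w ≤ √d
  have hcs : (∑ i, w i) ^ 2 ≤ (d:ℝ) := by
    have h := sq_sum_le_card_mul_sum_sq (s := Finset.univ) (f := w)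
    simpa [hw, Finset.card_univ] using h
  have hs_le : ∑ i, w i ≤ Real.sqrt d := by
    have := Real.sqrt_le_sqrt hcs
    calc ∑ i, w i ≤ |∑ i, w i| := le_abs_self _
    _ = Real.sqrt ((∑ i, w i) ^ 2) := (Real.sqrt_sq_eq_abs _).symm
    _ ≤ Real.sqrt d := this
  -- The sum must equal √d
  have hs_eq : ∑ i, w i = Real.sqrt d := by
    by_contra hne
    have hs_lt : ∑ i, w i < Real.sqrt d := lt_of_le_of_ne hs_le hne
    have hle := hopt u b hw_u
    have hγη : 0 < γ * η := mul_pos hγ hη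
    have h1 : (-b - γ * η * (∑ i, u i)) / σ < (-b - γ * η * (∑ i, w i)) / σ := by
      rw [hsum_u]
      have hσ0 : (0:ℝ) < σ := lt_trans one_pos hσ
      exact (div_lt_div_iff_of_pos_right hσ0).mpr (by nlinarith)
    have h2 : b - γ * η * (∑ i, u i) < b - γ * η * (∑ i, w i) := by
      rw [hsum_u]; nlinarith
    have := add_lt_add (stdNormalCDF_strictMono h1) (stdNormalCDF_strictMono h2)
    unfold mixtureStdError at hle
    linarith
  -- finish: sum of squares of differences is zero
  have hzero : ∑ i, (w i - 1 / Real.sqrt d) ^ 2 = 0 := by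
    have hexp : ∀ i : Fin d, (w i - 1 / Real.sqrt d) ^ 2
        = (w i) ^ 2 - 2 / Real.sqrt d * w i + 1 / (d:ℝ) := by
      intro i
      have : (1 / Real.sqrt d) ^ 2 = 1 / (d:ℝ) := by
        rw [div_pow, one_pow, sq, hsq]
      rw [sub_sq, this]; ring
    rw [Finset.sum_congr rfl (fun i _ => hexp i)]
    rw [Finset.sum_add_distrib, Finset.sum_sub_distrib, hw, ← Finset.mul_sum, hs_eq]
    simp only [Finset.sum_const, Finset.card_univ, Fintype.card_fin, nsmul_eq_mul]
    field_simp
    norm_num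
  intro i
  have h := (Finset.sum_eq_zero_iff_of_nonneg (fun i _ => sq_nonneg (w i - 1 / Real.sqrt d))).mp
    hzero i (Finset.mem_univ i)
  have := pow_eq_zero_iff (n := 2) (by norm_num) |>.mp h
  linarith
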